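/- arXiv:1705.08981 — 2 statements merged into one kernel-verified Lean document; each statement's English description precedes it below -/
import Mathlib

section
/- Let X = (X_1,…,X_m) be an m-tuple of N×N complex matrices with X^{[l]} := p^l ∑_{|w|=l} (X^w)* X^w. If p(X_1*X_1+⋯+X_m*X_m) ≤ θ I with 0 < θ < 1, then 0 ≤ X^{[l+1]} ≤ θ·X^{[l]} for every l ≥ 0, and hence X^{[l]} ≤ θ^l·I. -/
open Matrix
open scoped Matrix.Norms.L2Operator ComplexOrder

/-- `X^w`, the product of the coordinates of the tuple `X` along the word `w`. -/
noncomputable def wordProd {m N : ℕ} (X : Fin m → Matrix (Fin N) (Fin N) ℂ)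
    (w : List (Fin m)) : Matrix (Fin N) (Fin N) ℂ :=
  (w.map X).prod

/-- `X^{[l]} = p^l ∑_{|w|=l} (X^w)* X^w`, the sum over all words of length `l`. -/
noncomputable def lvlSum {m N : ℕ} (X : Fin m → Matrix (Fin N) (Fin N) ℂ) (p : ℝ) (l : ℕ) :
    Matrix (Fin N) (Fin N) ℂ :=
  (p ^ l : ℝ) • ∑ w : Fin l → Fin m, (wordProd X (List.ofFn w))ᴴ * wordProd X (List.ofFn w)

lemma psd_sum {N : ℕ} {ι : Type*} [Fintype ι] (f : ι → Matrix (Fin N) (Fin N) ℂ)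
    (h : ∀ i, (f i).PosSemidef) : (∑ i, f i).PosSemidef := by
  classical
  induction (Finset.univ : Finset ι) using Finset.induction with
  | empty => simpa using Matrix.PosSemidef.zero
  | insert _ _ hnot ih =>
      rw [Finset.sum_insert hnot]
      exact (h _).add ih

lemma psd_rsmul {N : ℕ} {c : ℝ} (hc : 0 ≤ c) {M : Matrix (Fin N) (Fin N) ℂ}
    (hM : M.PosSemidef) : (c • M).PosSemidef := by
  have h : c • M = (c : ℂ) • M := by ext i j; simp [Complex.real_smul]
  rw [h]
  refine ⟨?_, fun x => ?_⟩
  · unfold Matrix.IsHermitian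
    rw [conjTranspose_smul, Complex.star_def, Complex.conj_ofReal, hM.1.eq]
  · exact (hM.smul (a := (c : ℂ)) (by exact_mod_cast hc)).2 x

lemma lvlSum_zero {m N : ℕ} (X : Fin m → Matrix (Fin N) (Fin N) ℂ) (p : ℝ) :
    lvlSum X p 0 = 1 := by
  simp [lvlSum, wordProd]

lemma lvlSum_succ_eq {m N : ℕ} (X : Fin m → Matrix (Fin N) (Fin N) ℂ) (p : ℝ) (l : ℕ) :
    lvlSum X p (l + 1) = (p ^ (l + 1) : ℝ) • ∑ w : Fin l → Fin m,
      (wordProd X (List.ofFn w))ᴴ * (∑ i, (X i)ᴴ * X i) * wordProd X (List.ofFn w) := by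
  unfold lvlSum
  congr 1
  rw [← (Fin.consEquiv fun _ => Fin m).sum_comp]
  rw [Fintype.sum_prod_type]
  rw [Finset.sum_comm]
  refine Finset.sum_congr rfl fun w _ => ?_
  rw [Matrix.mul_sum, Finset.sum_mul]
  refine Finset.sum_congr rfl fun i _ => ?_
  have : wordProd X (List.ofFn ((Fin.consEquiv fun _ => Fin m) (i, w)))
      = X i * wordProd X (List.ofFn w) := by
    simp [Fin.consEquiv, List.ofFn_cons, wordProd]
  rw [this, conjTranspose_mul]
  simp only [Matrix.mul_assoc]

lemma key_identity {m N : ℕ} (X : Fin m → Matrix (Fin N) (Fin N) ℂ) (p θ : ℝ) (l : ℕ) :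
    θ • lvlSum X p l - lvlSum X p (l + 1)
      = (p ^ l : ℝ) • ∑ w : Fin l → Fin m,
          (wordProd X (List.ofFn w))ᴴ *
            (θ • (1 : Matrix (Fin N) (Fin N) ℂ) - p • ∑ i, (X i)ᴴ * X i) *
            wordProd X (List.ofFn w) := by
  have hterm : ∀ A : Matrix (Fin N) (Fin N) ℂ,
      Aᴴ * (θ • (1 : Matrix (Fin N) (Fin N) ℂ) - p • ∑ i, (X i)ᴴ * X i) * A
        = θ • (Aᴴ * A) - p • (Aᴴ * (∑ i, (X i)ᴴ * X i) * A) := by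
    intro A
    simp only [Matrix.mul_sub, Matrix.sub_mul, mul_smul_comm, smul_mul_assoc, Matrix.mul_one]
  have h2 : ∑ w : Fin l → Fin m,
      (wordProd X (List.ofFn w))ᴴ *
        (θ • (1 : Matrix (Fin N) (Fin N) ℂ) - p • ∑ i, (X i)ᴴ * X i) * wordProd X (List.ofFn w)
      = θ • (∑ w : Fin l → Fin m, (wordProd X (List.ofFn w))ᴴ * wordProd X (List.ofFn w))
        - p • ∑ w : Fin l → Fin m,
            (wordProd X (List.ofFn w))ᴴ * (∑ i, (X i)ᴴ * X i) * wordProd X (List.ofFn w) := by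
    simp only [hterm]
    rw [Finset.sum_sub_distrib, Finset.smul_sum, Finset.smul_sum]
  rw [h2, smul_sub, smul_smul, smul_smul, lvlSum_succ_eq]
  unfold lvlSum
  rw [smul_smul, mul_comm θ, pow_succ]

/-- If `p (X_1* X_1 + ⋯ + X_m* X_m) ≤ θ I` with `0 < θ < 1`, then
`0 ≤ X^{[l+1]} ≤ θ X^{[l]}` for every `l ≥ 0`, and hence `X^{[l]} ≤ θ^l I`
in the Loewner order. -/
theorem lvlSum_posSemidef_and_decay
    (m N : ℕ) (p θ : ℝ) (hp : 0 < p) (hθ0 : 0 < θ) (hθ1 : θ < 1)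
    (X : Fin m → Matrix (Fin N) (Fin N) ℂ)
    (hX : (θ • (1 : Matrix (Fin N) (Fin N) ℂ) - p • ∑ i, (X i)ᴴ * X i).PosSemidef) :
    ∀ l : ℕ,
      (lvlSum X p l).PosSemidef ∧ (lvlSum X p (l + 1)).PosSemidef ∧
      (θ • lvlSum X p l - lvlSum X p (l + 1)).PosSemidef ∧
      ((θ ^ l : ℝ) • (1 : Matrix (Fin N) (Fin N) ℂ) - lvlSum X p l).PosSemidef := by
  have hpsd : ∀ l, (lvlSum X p l).PosSemidef := fun l =>
    psd_rsmul (pow_nonneg hp.le l)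
      (psd_sum _ fun w => posSemidef_conjTranspose_mul_self _)
  have hdec : ∀ l, (θ • lvlSum X p l - lvlSum X p (l + 1)).PosSemidef := by
    intro l
    rw [key_identity]
    exact psd_rsmul (pow_nonneg hp.le l)
      (psd_sum _ fun w => hX.conjTranspose_mul_mul_same _)
  intro l
  refine ⟨hpsd l, hpsd (l + 1), hdec l, ?_⟩
  induction l with
  | zero =>
      rw [lvlSum_zero, pow_zero, one_smul, sub_self]
      exact Matrix.PosSemidef.zero
  | succ l ih =>
      have h : (θ ^ (l + 1) : ℝ) • (1 : Matrix (Fin N) (Fin N) ℂ) - lvlSum X p (l + 1)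
          = θ • ((θ ^ l : ℝ) • (1 : Matrix (Fin N) (Fin N) ℂ) - lvlSum X p l)
            + (θ • lvlSum X p l - lvlSum X p (l + 1)) := by
        rw [smul_sub, smul_smul, ← pow_succ']
        abel
      rw [h]
      exact (psd_rsmul hθ0.le ih).add (hdec l)
end

section
/- Let X be an m-tuple of N×N matrices such that the series ∑_{|w|≤l} f_w X^w converges as l → ∞ for every {f_w} ∈ l²(F_m). Then for all vectors e, ẽ ∈ ℂ^N the family {e* X^w ẽ}_{w∈F_m} belongs to l²(F_m), and consequently the series ∑_{w∈F_m} (X^w)* X^w converges in ℂ^{N×N}. -/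
open Matrix Filter
open scoped Matrix.Norms.L2Operator
open scoped ENNReal

/-- `E^{X,l}({f_w}) = ∑_{|w| ≤ l} f_w X^w`, a partial-sum evaluation map on `l²(F_m)`. -/
noncomputable def partialEval {m N : ℕ} (X : Fin m → Matrix (Fin N) (Fin N) ℂ) (l : ℕ)
    (f : lp (fun _ : List (Fin m) => ℂ) 2) : Matrix (Fin N) (Fin N) ℂ :=
  ∑ k ∈ Finset.range (l + 1), ∑ w : Fin k → Fin m,
    f (List.ofFn w) • wordProd X (List.ofFn w)

section Aux

lemma sum_words {m : ℕ} (g : List (Fin m) → ℂ) (F : Finset (List (Fin m)))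
    (hg : ∀ v ∉ F, g v = 0) (l : ℕ) (hl : ∀ v ∈ F, v.length ≤ l) :
    ∑ k ∈ Finset.range (l + 1), ∑ w : Fin k → Fin m, g (List.ofFn w) = ∑ v ∈ F, g v := by
  have hinj : ∀ k : ℕ, Function.Injective (List.ofFn : (Fin k → Fin m) → List (Fin m)) :=
    fun k a b hab => List.ofFn_inj.mp hab
  have h1 : ∀ k : ℕ, ∑ w : Fin k → Fin m, g (List.ofFn w)
      = ∑ v ∈ Finset.univ.image (List.ofFn : (Fin k → Fin m) → List (Fin m)), g v := by
    intro k
    rw [Finset.sum_image (fun a _ b _ h => hinj k h)]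
  simp_rw [h1]
  rw [← Finset.sum_biUnion]
  · refine (Finset.sum_subset ?_ ?_).symm
    · intro v hv
      rw [Finset.mem_biUnion]
      refine ⟨v.length, Finset.mem_range.2 (Nat.lt_succ_of_le (hl v hv)), ?_⟩
      simp only [Finset.mem_image, Finset.mem_univ, true_and]
      exact ⟨fun i => v.get i, by simp⟩
    · intro v _ hv
      exact hg v hv
  · intro a _ b hb hab
    simp only [Finset.disjoint_left, Finset.mem_image, Finset.mem_univ, true_and]
    rintro v ⟨w1, rfl⟩ ⟨w2, hw⟩
    exact hab (by simpa using (congrArg List.length hw).symm)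

lemma lp_sum_apply {ι κ : Type*} (s : Finset κ) (f : κ → lp (fun _ : ι => ℂ) 2) (v : ι) :
    (↑(∑ k ∈ s, f k) : ι → ℂ) v = ∑ k ∈ s, (f k : ι → ℂ) v :=
  map_sum (AddMonoidHom.mk' (fun g : lp (fun _ : ι => ℂ) 2 => (g : ι → ℂ) v)
    (fun a b => by simp [lp.coeFn_add])) f s

lemma single_apply' {ι : Type*} [DecidableEq ι] (v : ι) (a : ℂ) (u : ι) :
    (lp.single 2 v a : lp (fun _ : ι => ℂ) 2) u = if u = v then a else 0 := by
  by_cases h : u = v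
  · subst h; simp [lp.single_apply_self]
  · rw [lp.single_apply_ne (E := fun _ : ι => ℂ) 2 v a h, if_neg h]

noncomputable def coordCLM {ι : Type*} (w : ι) : lp (fun _ : ι => ℂ) 2 →L[ℂ] ℂ :=
  LinearMap.mkContinuous
    { toFun := fun f => f w
      map_add' := fun f g => by simp [lp.coeFn_add]
      map_smul' := fun c f => by simp [lp.coeFn_smul] }
    1 (fun f => by rw [one_mul]; exact lp.norm_apply_le_norm two_ne_zero f w)

noncomputable def B {N : ℕ} (e e2 : Fin N → ℂ) : Matrix (Fin N) (Fin N) ℂ →ₗ[ℂ] ℂ where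
  toFun A := star e ⬝ᵥ A.mulVec e2
  map_add' A C := by simp [Matrix.add_mulVec, dotProduct_add]
  map_smul' c A := by simp [Matrix.smul_mulVec, dotProduct_smul]

noncomputable def T {m N : ℕ} (X : Fin m → Matrix (Fin N) (Fin N) ℂ)
    (e e2 : Fin N → ℂ) (l : ℕ) : lp (fun _ : List (Fin m) => ℂ) 2 →L[ℂ] ℂ :=
  ∑ k ∈ Finset.range (l + 1), ∑ w : Fin k → Fin m,
    (B e e2 (wordProd X (List.ofFn w))) • coordCLM (List.ofFn w)

lemma T_apply {m N : ℕ} (X : Fin m → Matrix (Fin N) (Fin N) ℂ)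
    (e e2 : Fin N → ℂ) (l : ℕ) (f : lp (fun _ : List (Fin m) => ℂ) 2) :
    T X e e2 l f = ∑ k ∈ Finset.range (l + 1), ∑ w : Fin k → Fin m,
      (B e e2 (wordProd X (List.ofFn w))) * f (List.ofFn w) := by
  simp [T, ContinuousLinearMap.sum_apply, coordCLM, smul_eq_mul]
  rfl

lemma T_eq {m N : ℕ} (X : Fin m → Matrix (Fin N) (Fin N) ℂ)
    (e e2 : Fin N → ℂ) (l : ℕ) (f : lp (fun _ : List (Fin m) => ℂ) 2) :
    T X e e2 l f = B e e2 (partialEval X l f) := by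
  rw [T_apply, partialEval, map_sum]
  refine Finset.sum_congr rfl fun k _ => ?_
  rw [map_sum]
  refine Finset.sum_congr rfl fun w _ => ?_
  rw [_root_.map_smul, smul_eq_mul, mul_comm]

lemma key_summable {m N : ℕ} (X : Fin m → Matrix (Fin N) (Fin N) ℂ)
    (hX : ∀ f : lp (fun _ : List (Fin m) => ℂ) 2,
      ∃ L, Tendsto (fun l : ℕ => partialEval X l f) atTop (nhds L))
    (e e2 : Fin N → ℂ) :
    Summable fun w : List (Fin m) => ‖star e ⬝ᵥ (wordProd X w).mulVec e2‖ ^ 2 := by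
  classical
  set c : List (Fin m) → ℂ := fun w => B e e2 (wordProd X w) with hc
  have hBc : Continuous (B e e2 : Matrix (Fin N) (Fin N) ℂ →ₗ[ℂ] ℂ) :=
    LinearMap.continuous_of_finiteDimensional _
  have h_pt : ∀ f : lp (fun _ : List (Fin m) => ℂ) 2,
      ∃ C, ∀ l : ℕ, ‖T X e e2 l f‖ ≤ C := by
    intro f
    obtain ⟨L, hL⟩ := hX f
    have ht : Tendsto (fun l : ℕ => T X e e2 l f) atTop (nhds (B e e2 L)) := by
      simp_rw [T_eq]
      exact (hBc.tendsto L).comp hL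
    obtain ⟨C, hC⟩ := ht.norm.bddAbove_range
    exact ⟨C, fun l => hC (Set.mem_range_self l)⟩
  obtain ⟨C, hC⟩ := banach_steinhaus h_pt
  have hC0 : 0 ≤ C := le_trans (norm_nonneg _) (hC 0)
  have key : ∀ F : Finset (List (Fin m)), ∑ v ∈ F, ‖c v‖ ^ 2 ≤ C ^ 2 := by
    intro F
    set l : ℕ := F.sup List.length with hl
    set f : lp (fun _ : List (Fin m) => ℂ) 2 :=
      ∑ v ∈ F, lp.single 2 v (starRingEnd ℂ (c v)) with hf
    set s : ℝ := ∑ v ∈ F, ‖c v‖ ^ 2 with hs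
    have hs0 : 0 ≤ s := Finset.sum_nonneg fun v _ => sq_nonneg _
    have hfapp : ∀ u, (f : List (Fin m) → ℂ) u =
        if u ∈ F then starRingEnd ℂ (c u) else 0 := by
      intro u
      rw [hf, lp_sum_apply]
      simp_rw [single_apply']
      simp [Finset.sum_ite_eq F u fun v => starRingEnd ℂ (c v)]
    have hval : T X e e2 l f = (s : ℂ) := by
      rw [T_apply]
      have := sum_words (fun v => c v * (f : List (Fin m) → ℂ) v) F
        (fun v hv => by show c v * (f : List (Fin m) → ℂ) v = 0; rw [hfapp v, if_neg hv, mul_zero]) l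
        (fun v hv => Finset.le_sup hv)
      simp only [hc] at this ⊢
      rw [this, hs]
      push_cast
      refine Finset.sum_congr rfl fun v hv => ?_
      rw [hfapp v, if_pos hv, Complex.mul_conj]
      norm_cast
      rw [Complex.normSq_eq_norm_sq]
    have hns2 : ‖f‖ ^ 2 = s := by
      have h2 : (0:ℝ) < (2 : ℝ≥0∞).toReal := by norm_num
      have hsum := lp.norm_sum_single h2 (fun v => starRingEnd ℂ (c v)) F
      have h2' : (2 : ℝ≥0∞).toReal = ((2 : ℕ) : ℝ) := by norm_num
      rw [h2'] at hsum
      simp_rw [Real.rpow_natCast] at hsum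
      rw [hf, hsum, hs]
      refine Finset.sum_congr rfl fun v _ => ?_
      rw [RCLike.norm_conj]
    have hnf : ‖f‖ = Real.sqrt s := by
      rw [← hns2, Real.sqrt_sq (norm_nonneg f)]
    have hb : s ≤ C * Real.sqrt s := by
      have h1 : ‖T X e e2 l f‖ = s := by
        rw [hval, Complex.norm_real, Real.norm_of_nonneg hs0]
      calc s = ‖T X e e2 l f‖ := h1.symm
        _ ≤ ‖T X e e2 l‖ * ‖f‖ := (T X e e2 l).le_opNorm f
        _ ≤ C * Real.sqrt s := by
            rw [hnf]
            exact mul_le_mul_of_nonneg_right (hC l) (Real.sqrt_nonneg s)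
    nlinarith [Real.sq_sqrt hs0, Real.sqrt_nonneg s, hb]
  exact summable_of_sum_le (fun w => sq_nonneg _) key

end Aux

/-- If `∑_{|w| ≤ l} f_w X^w` converges as `l → ∞` for every `{f_w} ∈ l²(F_m)`, then for all
vectors `e, e2 ∈ ℂ^N` the family `{e* X^w e2}` belongs to `l²(F_m)`, and consequently the
series `∑_{w} (X^w)* X^w` converges in `ℂ^{N×N}`. -/
theorem vector_coefficients_square_summable
    (m N : ℕ) (X : Fin m → Matrix (Fin N) (Fin N) ℂ)
    (hX : ∀ f : lp (fun _ : List (Fin m) => ℂ) 2,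
      ∃ L, Tendsto (fun l : ℕ => partialEval X l f) atTop (nhds L)) :
    (∀ e e2 : Fin N → ℂ,
      Summable fun w : List (Fin m) => ‖star e ⬝ᵥ (wordProd X w).mulVec e2‖ ^ 2) ∧
    ∃ S, HasSum (fun w : List (Fin m) => (wordProd X w)ᴴ * wordProd X w) S := by
  refine ⟨fun e e2 => key_summable X hX e e2, ?_⟩
  have hent : ∀ k i : Fin N, Summable fun w => ‖wordProd X w k i‖ ^ 2 := by
    intro k i
    have h := key_summable X hX (Pi.single k 1) (Pi.single i 1)
    have heq : ∀ w : List (Fin m),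
        star (Pi.single k 1 : Fin N → ℂ) ⬝ᵥ (wordProd X w).mulVec (Pi.single i 1)
          = wordProd X w k i := by
      intro w
      have hst : star (Pi.single k 1 : Fin N → ℂ) = Pi.single k 1 := by
        ext x; simp [Pi.single_apply, apply_ite (star : ℂ → ℂ)]
      rw [hst, single_dotProduct, one_mul, Matrix.mulVec_single_one]; rfl
    simp_rw [heq] at h
    exact h
  have hterm : ∀ k i j : Fin N,
      Summable fun w : List (Fin m) =>
        starRingEnd ℂ (wordProd X w k i) * wordProd X w k j := by
    intro k i j
    refine Summable.of_norm ?_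
    refine Summable.of_nonneg_of_le (fun w => norm_nonneg _) (fun w => ?_)
      ((hent k i).add (hent k j))
    rw [norm_mul, RCLike.norm_conj]
    nlinarith [norm_nonneg (wordProd X w k i), norm_nonneg (wordProd X w k j),
      sq_nonneg (‖wordProd X w k i‖ - ‖wordProd X w k j‖)]
  have hmat : Summable fun w : List (Fin m) => (wordProd X w)ᴴ * wordProd X w := by
    apply Pi.summable.2
    intro i
    apply Pi.summable.2
    intro j
    have : (fun w : List (Fin m) => ((wordProd X w)ᴴ * wordProd X w) i j)
        = fun w => ∑ k, starRingEnd ℂ (wordProd X w k i) * wordProd X w k j := by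
      funext w
      simp [Matrix.mul_apply, Matrix.conjTranspose_apply]
    rw [this]
    exact summable_sum fun k _ => hterm k i j
  exact ⟨_, hmat.hasSum⟩
end
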